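/- (Decomposition Theorem.) Let G be a finite simple graph with vertex set V. In the multivariate polynomial ring MvPolynomial ℕ ℚ, for a graph automorphism γ let s(γ) = Π_{k ≥ 1} X_k^{c_k(γ)}, where c_k(γ) is the number of cycles of length k of the permutation γ of V (fixed points counting as cycles of length 1); define the imbedding sum Z(G) = (1/|Γ(G)|) · Σ_{γ ∈ Γ(G)} |F(γ)| · s(γ), and for a subgroup H ≤ Γ(G) define the cycle index Z(H) = (1/|H|) · Σ_{γ ∈ H} s(γ). Then Z(G) = Σ_{ρ ∈ T} Z(Γ_ρ(G)), where T is a complete set of representatives of the orbits of Γ(G) on the set of rotation systems of G (the unlabeled imbeddings). -/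

import Mathlib

/-- A rotation system for a simple graph `G`. -/
def IsRotationSystem {V : Type*} (G : SimpleGraph V) (ρ : V → Equiv.Perm V) : Prop :=
  ∀ v : V, (ρ v).IsCycleOn (G.neighborSet v) ∧ ∀ w : V, w ∉ G.neighborSet v → ρ v w = w

/-- The action of a permutation `γ` on rotation systems: `(γ·ρ)_{γ(v)} = γ ∘ ρ_v ∘ γ⁻¹`. -/
def rotAct {V : Type*} (γ : Equiv.Perm V) (ρ : V → Equiv.Perm V) : V → Equiv.Perm V :=
  fun w => γ * ρ (γ⁻¹ w) * γ⁻¹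

/-- The automorphism group `Γ(G)` of a simple graph, as a set of permutations. -/
def autSet {V : Type*} (G : SimpleGraph V) : Set (Equiv.Perm V) :=
  {γ | ∀ u w : V, G.Adj (γ u) (γ w) ↔ G.Adj u w}

/-- The length of the orbit of `v` under the cyclic group generated by `γ`. -/
noncomputable def orbitLen {V : Type*} (γ : Equiv.Perm V) (v : V) : ℕ :=
  ({w | ∃ k : ℕ, (γ ^ k) v = w}).ncard

/-- `c_k(γ)`: the number of cycles of length `k` of the permutation `γ` (fixed points counting
as cycles of length 1). -/
noncomputable def cycleCount {V : Type*} (γ : Equiv.Perm V) (k : ℕ) : ℕ :=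
  ({v | orbitLen γ v = k}).ncard / k

/-- The cycle-type monomial `s(γ) = Π_k X_k ^ c_k(γ)` in `MvPolynomial ℕ ℚ`. -/
noncomputable def cycleMonomial {V : Type*} [Fintype V] (γ : Equiv.Perm V) :
    MvPolynomial ℕ ℚ :=
  ∏ k ∈ Finset.range (Fintype.card V + 1), (MvPolynomial.X k) ^ cycleCount γ k

/-- The cycle index `Z(H) = (1/|H|) Σ_{γ ∈ H} s(γ)` of a set `H` of permutations of the
vertices. -/
noncomputable def cycleIndex {V : Type*} [Fintype V] (H : Set (Equiv.Perm V)) :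
    MvPolynomial ℕ ℚ :=
  ((H.ncard : ℚ))⁻¹ • ∑ᶠ γ ∈ H, cycleMonomial γ

/-- The imbedding sum `Z(G) = (1/|Γ(G)|) Σ_{γ ∈ Γ(G)} |F(γ)| s(γ)` of a simple graph. -/
noncomputable def imbeddingSum {V : Type*} [Fintype V] (G : SimpleGraph V) :
    MvPolynomial ℕ ℚ :=
  (((autSet G).ncard : ℚ))⁻¹ •
    ∑ᶠ γ ∈ autSet G,
      (({ρ | IsRotationSystem G ρ ∧ rotAct γ ρ = ρ}).ncard : ℚ) • cycleMonomial γ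

section
variable {V : Type*}

lemma one_mem_aut (G : SimpleGraph V) : (1 : Equiv.Perm V) ∈ autSet G := by
  intro u w; rfl

lemma mul_mem_aut {G : SimpleGraph V} {γ δ : Equiv.Perm V} (hγ : γ ∈ autSet G)
    (hδ : δ ∈ autSet G) : γ * δ ∈ autSet G := by
  intro u w; simpa using (hγ (δ u) (δ w)).trans (hδ u w)

lemma inv_mem_aut {G : SimpleGraph V} {γ : Equiv.Perm V} (hγ : γ ∈ autSet G) :
    γ⁻¹ ∈ autSet G := by
  intro u w
  conv_rhs => rw [← Equiv.apply_symm_apply γ u, ← Equiv.apply_symm_apply γ w]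
  exact (hγ _ _).symm

lemma rotAct_one (ρ : V → Equiv.Perm V) : rotAct 1 ρ = ρ := by
  funext w; simp [rotAct]

lemma rotAct_mul (γ δ : Equiv.Perm V) (ρ : V → Equiv.Perm V) :
    rotAct (γ * δ) ρ = rotAct γ (rotAct δ ρ) := by
  funext w; simp [rotAct, mul_assoc]

end
section
variable {V : Type*}

lemma neighborSet_image {G : SimpleGraph V} {γ : Equiv.Perm V} (hγ : γ ∈ autSet G) (w : V) :
    G.neighborSet w = γ '' G.neighborSet (γ⁻¹ w) := by
  ext u
  constructor
  · intro hu
    refine ⟨γ⁻¹ u, ?_, by simp⟩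
    have := (hγ (γ⁻¹ w) (γ⁻¹ u)).mp
    simp only [← Equiv.Perm.mul_apply, mul_inv_cancel, Equiv.Perm.one_apply] at this
    exact this hu
  · rintro ⟨x, hx, rfl⟩
    have := (hγ (γ⁻¹ w) x).mpr hx
    simpa using this

lemma rotAct_isRotationSystem {G : SimpleGraph V} {γ : Equiv.Perm V} (hγ : γ ∈ autSet G)
    {ρ : V → Equiv.Perm V} (hρ : IsRotationSystem G ρ) :
    IsRotationSystem G (rotAct γ ρ) := by
  intro w
  constructor
  · rw [neighborSet_image hγ w]
    exact (hρ (γ⁻¹ w)).1.conj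
  · intro u hu
    have hu' : γ⁻¹ u ∉ G.neighborSet (γ⁻¹ w) := by
      intro h
      exact hu (by rw [neighborSet_image hγ w]; exact ⟨γ⁻¹ u, h, by simp⟩)
    have := (hρ (γ⁻¹ w)).2 _ hu'
    simp only [rotAct, Equiv.Perm.coe_mul, Function.comp_apply, this]
    simp

lemma orbitLen_conj (δ γ : Equiv.Perm V) (v : V) :
    orbitLen (δ * γ * δ⁻¹) (δ v) = orbitLen γ v := by
  unfold orbitLen
  have hset : {w | ∃ k : ℕ, ((δ * γ * δ⁻¹) ^ k) (δ v) = w}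
      = δ '' {w | ∃ k : ℕ, (γ ^ k) v = w} := by
    ext w
    simp only [Set.mem_setOf_eq, Set.mem_image, conj_pow]
    constructor
    · rintro ⟨k, hk⟩
      exact ⟨(γ ^ k) v, ⟨k, rfl⟩, by simpa using hk⟩
    · rintro ⟨x, ⟨k, rfl⟩, rfl⟩
      exact ⟨k, by simp⟩
  rw [hset, Set.ncard_image_of_injective _ δ.injective]

lemma cycleCount_conj (δ γ : Equiv.Perm V) (k : ℕ) :
    cycleCount (δ * γ * δ⁻¹) k = cycleCount γ k := by
  unfold cycleCount
  have hset : {v | orbitLen (δ * γ * δ⁻¹) v = k} = δ '' {v | orbitLen γ v = k} := by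
    ext v
    simp only [Set.mem_setOf_eq, Set.mem_image]
    constructor
    · intro h
      exact ⟨δ⁻¹ v, by rw [← orbitLen_conj δ γ (δ⁻¹ v)]; simpa using h, by simp⟩
    · rintro ⟨u, hu, rfl⟩
      rw [orbitLen_conj]; exact hu
  rw [hset, Set.ncard_image_of_injective _ δ.injective]

lemma cycleMonomial_conj [Fintype V] (δ γ : Equiv.Perm V) :
    cycleMonomial (δ * γ * δ⁻¹) = cycleMonomial γ := by
  unfold cycleMonomial
  simp [cycleCount_conj]

end
section
set_option linter.unusedSectionVars false
variable {V : Type*} [Fintype V] [DecidableEq V]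

/-- The automorphism group as a finset. -/
noncomputable def Gamf (G : SimpleGraph V) : Finset (Equiv.Perm V) :=
  (Set.toFinite (autSet G)).toFinset

/-- The set of rotation systems as a finset. -/
noncomputable def Rotf (G : SimpleGraph V) : Finset (V → Equiv.Perm V) :=
  (Set.toFinite {ρ | IsRotationSystem G ρ}).toFinset

/-- The stabilizer of a rotation system as a finset. -/
noncomputable def Stabf (G : SimpleGraph V) (ρ : V → Equiv.Perm V) : Finset (Equiv.Perm V) :=
  (Set.toFinite {γ ∈ autSet G | rotAct γ ρ = ρ}).toFinset

@[simp] lemma mem_Gamf {G : SimpleGraph V} {γ : Equiv.Perm V} :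
    γ ∈ Gamf G ↔ γ ∈ autSet G := Set.Finite.mem_toFinset _

@[simp] lemma mem_Rotf {G : SimpleGraph V} {ρ : V → Equiv.Perm V} :
    ρ ∈ Rotf G ↔ IsRotationSystem G ρ := Set.Finite.mem_toFinset _

@[simp] lemma mem_Stabf {G : SimpleGraph V} {ρ : V → Equiv.Perm V} {γ : Equiv.Perm V} :
    γ ∈ Stabf G ρ ↔ γ ∈ autSet G ∧ rotAct γ ρ = ρ := Set.Finite.mem_toFinset _

lemma rotAct_inv_eq {γ : Equiv.Perm V} {ρ ρ' : V → Equiv.Perm V} (h : rotAct γ ρ = ρ') :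
    rotAct γ⁻¹ ρ' = ρ := by
  rw [← h, ← rotAct_mul, inv_mul_cancel, rotAct_one]

/-- The stabilizer sums of two rotation systems in the same orbit agree. -/
lemma stab_sum_conj {G : SimpleGraph V} {δ : Equiv.Perm V} (hδ : δ ∈ autSet G)
    (ρ₀ : V → Equiv.Perm V) :
    ∑ γ ∈ Stabf G (rotAct δ ρ₀), cycleMonomial γ = ∑ γ ∈ Stabf G ρ₀, cycleMonomial γ := by
  refine Finset.sum_nbij' (fun γ => δ⁻¹ * γ * δ) (fun γ => δ * γ * δ⁻¹) ?_ ?_ ?_ ?_ ?_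
  · intro γ hγ
    rw [mem_Stabf] at hγ ⊢
    refine ⟨mul_mem_aut (mul_mem_aut (inv_mem_aut hδ) hγ.1) hδ, ?_⟩
    rw [rotAct_mul, rotAct_mul, hγ.2]
    exact rotAct_inv_eq rfl
  · intro γ hγ
    rw [mem_Stabf] at hγ ⊢
    refine ⟨mul_mem_aut (mul_mem_aut hδ hγ.1) (inv_mem_aut hδ), ?_⟩
    rw [rotAct_mul, rotAct_mul, rotAct_inv_eq rfl, hγ.2]
  · intro γ _; group
  · intro γ _; group
  · intro γ _
    conv_lhs => rw [show γ = δ * (δ⁻¹ * γ * δ) * δ⁻¹ by group]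
    rw [cycleMonomial_conj]

/-- Orbit–stabilizer. -/
lemma orbit_mul_stab {G : SimpleGraph V} (ρ₀ : V → Equiv.Perm V) :
    ((Gamf G).image (fun γ => rotAct γ ρ₀)).card * (Stabf G ρ₀).card = (Gamf G).card := by
  rw [Finset.card_eq_sum_card_fiberwise
    (f := fun γ => rotAct γ ρ₀) (t := (Gamf G).image (fun γ => rotAct γ ρ₀))
    (fun γ hγ => Finset.mem_image_of_mem _ hγ)]
  rw [Finset.sum_congr rfl
    (fun ρ' hρ' => (?_ : ({γ ∈ Gamf G | rotAct γ ρ₀ = ρ'}).card = (Stabf G ρ₀).card)),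
    Finset.sum_const, smul_eq_mul, mul_comm]
  obtain ⟨δ, hδ, rfl⟩ := Finset.mem_image.mp hρ'
  rw [mem_Gamf] at hδ
  refine Finset.card_nbij' (fun γ => δ⁻¹ * γ) (fun γ => δ * γ) ?_ ?_ ?_ ?_
  · intro γ hγ
    rw [Finset.mem_coe, Finset.mem_filter, mem_Gamf] at hγ
    rw [Finset.mem_coe, mem_Stabf]
    refine ⟨mul_mem_aut (inv_mem_aut hδ) hγ.1, ?_⟩
    rw [rotAct_mul, hγ.2]
    exact rotAct_inv_eq rfl
  · intro γ hγ
    rw [Finset.mem_coe, mem_Stabf] at hγ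
    rw [Finset.mem_coe, Finset.mem_filter, mem_Gamf]
    exact ⟨mul_mem_aut hδ hγ.1, by rw [rotAct_mul, hγ.2]⟩
  · intro γ _; group
  · intro γ _; group

end
theorem decomposition_theorem {V : Type*} [Fintype V] [DecidableEq V] (G : SimpleGraph V)
    (T : Finset (V → Equiv.Perm V))
    (hT : ∀ ρ ∈ T, IsRotationSystem G ρ)
    (hT' : ∀ ρ : V → Equiv.Perm V, IsRotationSystem G ρ →
      ∃! ρ' : V → Equiv.Perm V, ρ' ∈ T ∧ ∃ γ ∈ autSet G, rotAct γ ρ = ρ') :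
    imbeddingSum G = ∑ ρ ∈ T, cycleIndex {γ ∈ autSet G | rotAct γ ρ = ρ} := by
  classical
  set Fixf : Equiv.Perm V → Finset (V → Equiv.Perm V) :=
    fun γ => (Set.toFinite {ρ | IsRotationSystem G ρ ∧ rotAct γ ρ = ρ}).toFinset with hFixf
  have hmemFix : ∀ (γ : Equiv.Perm V) (ρ : V → Equiv.Perm V),
      ρ ∈ Fixf γ ↔ IsRotationSystem G ρ ∧ rotAct γ ρ = ρ :=
    fun γ ρ => Set.Finite.mem_toFinset _
  -- Step 1 : write `imbeddingSum` with finset sums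
  have step1 : imbeddingSum G
      = ((Gamf G).card : ℚ)⁻¹ • ∑ γ ∈ Gamf G, ∑ ρ ∈ Fixf γ, cycleMonomial γ := by
    unfold imbeddingSum
    have e1 : ∑ᶠ γ ∈ autSet G,
          ((({ρ | IsRotationSystem G ρ ∧ rotAct γ ρ = ρ}).ncard : ℚ) • cycleMonomial γ)
        = ∑ γ ∈ Gamf G,
          ((({ρ | IsRotationSystem G ρ ∧ rotAct γ ρ = ρ}).ncard : ℚ) • cycleMonomial γ) :=
      finsum_mem_eq_finite_toFinset_sum _ (Set.toFinite _)
    have e2 : (autSet G).ncard = (Gamf G).card :=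
      Set.ncard_eq_toFinset_card _ (Set.toFinite _)
    rw [e1, e2]
    congr 1
    refine Finset.sum_congr rfl fun γ _ => ?_
    rw [Set.ncard_eq_toFinset_card _ (Set.toFinite _), Finset.sum_const,
      Nat.cast_smul_eq_nsmul]
  -- RHS summands as finset sums
  have hRHS : ∀ ρ : V → Equiv.Perm V, cycleIndex {γ ∈ autSet G | rotAct γ ρ = ρ}
      = ((Stabf G ρ).card : ℚ)⁻¹ • ∑ γ ∈ Stabf G ρ, cycleMonomial γ := by
    intro ρ
    unfold cycleIndex
    rw [Set.ncard_eq_toFinset_card _ (Set.toFinite _),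
      finsum_mem_eq_finite_toFinset_sum _ (Set.toFinite _)]
    rfl
  -- Step 2 : exchange the order of summation
  have step2 : ∑ γ ∈ Gamf G, ∑ ρ ∈ Fixf γ, cycleMonomial γ
      = ∑ ρ ∈ Rotf G, ∑ γ ∈ Stabf G ρ, cycleMonomial γ := by
    refine Finset.sum_comm' fun γ ρ => ?_
    simp only [hmemFix, mem_Gamf, mem_Rotf, mem_Stabf]
    tauto
  -- Step 3 : partition the rotation systems into orbits
  have hpart : Rotf G = T.biUnion (fun ρ₀ => (Gamf G).image fun γ => rotAct γ ρ₀) := by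
    ext ρ
    simp only [Finset.mem_biUnion, Finset.mem_image, mem_Rotf, mem_Gamf]
    constructor
    · intro h
      obtain ⟨ρ', ⟨hρ'T, γ, hγ, hact⟩, -⟩ := hT' ρ h
      exact ⟨ρ', hρ'T, γ⁻¹, inv_mem_aut hγ, rotAct_inv_eq hact⟩
    · rintro ⟨ρ₀, hρ₀, γ, hγ, rfl⟩
      exact rotAct_isRotationSystem hγ (hT ρ₀ hρ₀)
  have hdisj : (↑T : Set (V → Equiv.Perm V)).PairwiseDisjoint
      (fun ρ₀ => (Gamf G).image fun γ => rotAct γ ρ₀) := by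
    intro ρ₀ h₀ ρ₁ h₁ hne
    simp only [Function.onFun]
    rw [Finset.disjoint_left]
    intro ρ hρ0 hρ1
    obtain ⟨γ, hγ, rfl⟩ := Finset.mem_image.mp hρ0
    obtain ⟨δ, hδ, heq⟩ := Finset.mem_image.mp hρ1
    rw [mem_Gamf] at hγ hδ
    have hρ₀T : ρ₀ ∈ T := by simpa using h₀
    have hρ₁T : ρ₁ ∈ T := by simpa using h₁
    have hrot : IsRotationSystem G (rotAct γ ρ₀) := rotAct_isRotationSystem hγ (hT ρ₀ hρ₀T)
    obtain ⟨ρ', -, huniq⟩ := hT' _ hrot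
    have e0 := huniq ρ₀ ⟨hρ₀T, γ⁻¹, inv_mem_aut hγ, rotAct_inv_eq rfl⟩
    have e1 := huniq ρ₁ ⟨hρ₁T, δ⁻¹, inv_mem_aut hδ, rotAct_inv_eq heq⟩
    exact hne (e0.trans e1.symm)
  rw [step1, step2, hpart, Finset.sum_biUnion hdisj, Finset.smul_sum]
  refine Finset.sum_congr rfl fun ρ₀ hρ₀ => ?_
  rw [hRHS ρ₀]
  -- Step 4 : the inner sum is constant on each orbit
  have horb : ∑ ρ ∈ (Gamf G).image (fun γ => rotAct γ ρ₀), ∑ γ ∈ Stabf G ρ, cycleMonomial γ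
      = ((Gamf G).image (fun γ => rotAct γ ρ₀)).card • ∑ γ ∈ Stabf G ρ₀, cycleMonomial γ := by
    rw [← Finset.sum_const]
    refine Finset.sum_congr rfl fun ρ hρ => ?_
    obtain ⟨δ, hδ, rfl⟩ := Finset.mem_image.mp hρ
    exact stab_sum_conj (mem_Gamf.mp hδ) ρ₀
  rw [horb, ← Nat.cast_smul_eq_nsmul ℚ, smul_smul]
  congr 1
  -- Step 5 : orbit–stabilizer arithmetic
  have h1 : (1 : Equiv.Perm V) ∈ Gamf G := mem_Gamf.mpr (one_mem_aut G)
  have horb0 : (((Gamf G).image (fun γ => rotAct γ ρ₀)).card : ℚ) ≠ 0 :=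
    Nat.cast_ne_zero.mpr (Finset.card_ne_zero_of_mem (Finset.mem_image_of_mem _ h1))
  have hs1 : (1 : Equiv.Perm V) ∈ Stabf G ρ₀ := mem_Stabf.mpr ⟨one_mem_aut G, rotAct_one ρ₀⟩
  have hsc : ((Stabf G ρ₀).card : ℚ) ≠ 0 :=
    Nat.cast_ne_zero.mpr (Finset.card_ne_zero_of_mem hs1)
  have hg : ((Gamf G).card : ℚ)
      = (((Gamf G).image (fun γ => rotAct γ ρ₀)).card : ℚ) * ((Stabf G ρ₀).card : ℚ) := by
    exact_mod_cast (orbit_mul_stab ρ₀).symm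
  rw [hg]
  field_simp
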